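/- arXiv:1007.5285 — 3 statements merged into one kernel-verified Lean document; each statement's English description precedes it below -/
import Mathlib

section
/- Let R be a commutative ring and let f = ax² + bxy + cy² be a binary quadratic form over R with a, b, c generating the unit ideal of R. Then Spec R is covered by the basic open sets D(a), D(a+b+c), D(c), and on each of these open sets there is an invertible linear change of the variables x, y transforming f into a form whose x²-coefficient is a unit. -/
open Matrix

/-- If `f = ax² + bxy + cy²` has `(a, b, c) = R`, then `Spec R` is covered
by the basic opens `D(a)`, `D(a+b+c)`, `D(c)` (i.e. `(a, a+b+c, c) = R`), and over each
corresponding localization there is an invertible linear change of variables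
`g ∈ GL₂` making the `x²`-coefficient of the transformed form,
namely `f(g₀₀, g₁₀) = a·g₀₀² + b·g₀₀·g₁₀ + c·g₁₀²`, a unit. -/
theorem primitive_form_unit_coefficient_cover (R : Type*) [CommRing R] (a b c : R)
    (h : Ideal.span {a, b, c} = ⊤) :
    Ideal.span {a, a + b + c, c} = ⊤ ∧
    ∀ s : R, s ∈ ({a, a + b + c, c} : Set R) →
      ∃ g : GL (Fin 2) (Localization.Away s),
        IsUnit (algebraMap R (Localization.Away s) a * (g.val 0 0) ^ 2 +
          algebraMap R (Localization.Away s) b * (g.val 0 0) * (g.val 1 0) +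
          algebraMap R (Localization.Away s) c * (g.val 1 0) ^ 2) := by
  constructor
  · rw [eq_top_iff, ← h, Ideal.span_le]
    intro x hx
    simp only [Set.mem_insert_iff, Set.mem_singleton_iff] at hx
    have ha : a ∈ Ideal.span ({a, a + b + c, c} : Set R) :=
      Ideal.subset_span (by simp)
    have habc : a + b + c ∈ Ideal.span ({a, a + b + c, c} : Set R) :=
      Ideal.subset_span (by simp)
    have hc : c ∈ Ideal.span ({a, a + b + c, c} : Set R) :=
      Ideal.subset_span (by simp)
    have hb : b ∈ Ideal.span ({a, a + b + c, c} : Set R) := by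
      have h2 := sub_mem (sub_mem habc ha) hc
      have e : a + b + c - a - c = b := by ring
      rwa [e] at h2
    rcases hx with rfl | rfl | rfl
    · exact ha
    · exact hb
    · exact hc
  · intro s hs
    have hu : IsUnit (algebraMap R (Localization.Away s) s) :=
      IsLocalization.Away.algebraMap_isUnit s
    rcases hs with rfl | rfl | rfl
    · refine ⟨1, ?_⟩
      simpa using hu
    · refine ⟨⟨!![1, 0; 1, 1], !![1, 0; -1, 1], by norm_num [Matrix.mul_fin_two,
        ← Matrix.ext_iff, Fin.forall_fin_two], by norm_num [Matrix.mul_fin_two,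
        ← Matrix.ext_iff, Fin.forall_fin_two]⟩, ?_⟩
      simpa [map_add, mul_one] using hu
    · refine ⟨⟨!![0, 1; 1, 0], !![0, 1; 1, 0], by norm_num [Matrix.mul_fin_two,
        ← Matrix.ext_iff, Fin.forall_fin_two], by norm_num [Matrix.mul_fin_two,
        ← Matrix.ext_iff, Fin.forall_fin_two]⟩, ?_⟩
      simpa using hu
end

section
/- Let D be an integral domain with fraction field K, let C be a quadratic D-algebra (free of rank 2 as a D-module) with nonzero discriminant, and let M be a traceable C-module. Then M is isomorphic as a C-module to a full ideal of C, i.e., to a C-submodule I ⊆ C that is free of rank 2 as a D-module. -/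
/-- Over an integral domain `D`, if `CC` is a quadratic `D`-algebra
(free of rank 2 over `D`) with nonzero discriminant and `M` is a traceable
`CC`-module (free of rank 2 over `D`, with each `γ : CC` having the same `D`-linear
trace on `M` as on `CC`), then `M` is isomorphic as a `CC`-module to a full ideal of
`CC`, i.e. an ideal that is free of rank 2 as a `D`-module. -/
theorem traceable_module_realized_as_full_ideal
    (D CC : Type*) [CommRing D] [IsDomain D] [CommRing CC] [Algebra D CC]
    (bC : Module.Basis (Fin 2) D CC) (hdisc : Algebra.discr D ⇑bC ≠ 0)
    (M : Type*) [AddCommGroup M] [Module D M] [Module CC M] [IsScalarTower D CC M]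
    (bM : Module.Basis (Fin 2) D M)
    (htr : ∀ γ : CC,
      LinearMap.trace D M ((LinearMap.lsmul CC M γ).restrictScalars D) =
        LinearMap.trace D CC (LinearMap.mulLeft D γ)) :
    ∃ I : Ideal CC, Nonempty (Module.Basis (Fin 2) D I) ∧ Nonempty (M ≃ₗ[CC] I) := by
  classical
  -- the matrix of the action of `γ` on `M`
  set φ : CC → Matrix (Fin 2) (Fin 2) D :=
    fun γ => LinearMap.toMatrix bM bM ((LinearMap.lsmul CC M γ).restrictScalars D) with hφ
  have hφmul : ∀ γ δ : CC, φ (γ * δ) = φ γ * φ δ := by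
    intro γ δ
    have hc : ((LinearMap.lsmul CC M (γ * δ)).restrictScalars D) =
        ((LinearMap.lsmul CC M γ).restrictScalars D).comp
          ((LinearMap.lsmul CC M δ).restrictScalars D) := by
      ext x
      simp only [LinearMap.coe_restrictScalars, LinearMap.lsmul_apply, LinearMap.coe_comp,
        Function.comp_apply]
      exact mul_smul γ δ x
    simp only [hφ, hc, LinearMap.toMatrix_comp bM bM bM]
  have hφtr : ∀ γ : CC, Matrix.trace (φ γ) = Algebra.trace D CC γ := by
    intro γ
    have h1 : Matrix.trace (φ γ)
        = LinearMap.trace D M ((LinearMap.lsmul CC M γ).restrictScalars D) :=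
      (LinearMap.trace_eq_matrix_trace D bM _).symm
    rw [h1, htr, Algebra.trace_apply]
    congr 1
  have htm : ∀ i j, Algebra.traceMatrix D ⇑bC i j = Matrix.trace (φ (bC i) * φ (bC j)) := by
    intro i j
    rw [Algebra.traceMatrix_apply, Algebra.traceForm_apply, ← hφmul, hφtr]
  -- the matrix (in bases bC, bM) of the map `γ ↦ γ • m`
  set F : M → Matrix (Fin 2) (Fin 2) D :=
    fun m => LinearMap.toMatrix bC bM ((LinearMap.toSpanSingleton CC M m).restrictScalars D)
    with hF
  have hφentry : ∀ (γ : CC) (i j : Fin 2), φ γ i j = bM.repr (γ • bM j) i := by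
    intro γ i j
    simp [hφ, LinearMap.toMatrix_apply]
  have hFentry : ∀ (m : M) (i j : Fin 2), F m i j = bM.repr ((bC j) • m) i := by
    intro m i j
    simp [hF, LinearMap.toMatrix_apply]
  -- there is `m : M` with `det (F m) ≠ 0`
  have hex : ∃ m : M, (F m).det ≠ 0 := by
    by_contra hcon
    push_neg at hcon
    apply hdisc
    have e0 : ∀ i j, F (bM 0) i j = φ (bC j) i 0 := by
      intro i j; rw [hFentry, hφentry]
    have e1 : ∀ i j, F (bM 1) i j = φ (bC j) i 1 := by
      intro i j; rw [hFentry, hφentry]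
    have e2 : ∀ i j, F (bM 0 + bM 1) i j = φ (bC j) i 0 + φ (bC j) i 1 := by
      intro i j
      rw [hFentry, hφentry, hφentry, smul_add, map_add, Finsupp.add_apply]
    have h1 : φ (bC 0) 0 0 * φ (bC 1) 1 0 - φ (bC 1) 0 0 * φ (bC 0) 1 0 = 0 := by
      simpa only [Matrix.det_fin_two, e0] using hcon (bM 0)
    have h2 : φ (bC 0) 0 1 * φ (bC 1) 1 1 - φ (bC 1) 0 1 * φ (bC 0) 1 1 = 0 := by
      simpa only [Matrix.det_fin_two, e1] using hcon (bM 1)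
    have h3 : (φ (bC 0) 0 0 + φ (bC 0) 0 1) * (φ (bC 1) 1 0 + φ (bC 1) 1 1)
        - (φ (bC 1) 0 0 + φ (bC 1) 0 1) * (φ (bC 0) 1 0 + φ (bC 0) 1 1) = 0 := by
      simpa only [Matrix.det_fin_two, e2] using hcon (bM 0 + bM 1)
    set p := φ (bC 0) 0 0
    set q := φ (bC 0) 0 1
    set r := φ (bC 0) 1 0
    set s := φ (bC 0) 1 1
    set t := φ (bC 1) 0 0
    set u := φ (bC 1) 0 1
    set v := φ (bC 1) 1 0
    set w := φ (bC 1) 1 1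
    rw [Algebra.discr_def, Matrix.det_fin_two]
    simp only [htm, Matrix.trace_fin_two, Matrix.mul_apply, Fin.sum_univ_two]
    linear_combination
      (2*p*u - 2*q*t - q*w + s*u - (p*w - q*v + r*u - s*t)) * h1 +
      (p*v - r*t + 2*r*w - 2*s*v - (p*w - q*v + r*u - s*t)) * h2 +
      (p*w - q*v + r*u - s*t) * h3
  obtain ⟨m, hdet⟩ := hex
  set f : CC →ₗ[CC] M := LinearMap.toSpanSingleton CC M m with hf
  set Fm : Matrix (Fin 2) (Fin 2) D := F m with hFm
  set d : D := Fm.det with hd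
  set T : M →ₗ[D] CC := Matrix.toLin bM bC Fm.adjugate with hT
  have hTf : ∀ γ : CC, T (f γ) = d • γ := by
    intro γ
    have hcomp : T.comp (f.restrictScalars D) = d • LinearMap.id := by
      apply (LinearMap.toMatrix bC bC).injective
      rw [LinearMap.toMatrix_comp bC bM bC]
      have : LinearMap.toMatrix bC bM (f.restrictScalars D) = Fm := rfl
      rw [this, hT, LinearMap.toMatrix_toLin, Matrix.adjugate_mul, map_smul,
        LinearMap.toMatrix_id]
    exact DFunLike.congr_fun hcomp γ
  have hfT : ∀ x : M, f (T x) = d • x := by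
    intro x
    have hcomp : (f.restrictScalars D).comp T = d • LinearMap.id := by
      apply (LinearMap.toMatrix bM bM).injective
      rw [LinearMap.toMatrix_comp bM bC bM]
      have : LinearMap.toMatrix bC bM (f.restrictScalars D) = Fm := rfl
      rw [this, hT, LinearMap.toMatrix_toLin, Matrix.mul_adjugate, map_smul,
        LinearMap.toMatrix_id]
    exact DFunLike.congr_fun hcomp x
  have hcancelC : ∀ x : CC, d • x = 0 → x = 0 := by
    intro x hx
    have h' : d • bC.repr x = 0 := by rw [← map_smul, hx, map_zero]
    have hrepr : bC.repr x = 0 := by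
      ext i
      have := DFunLike.congr_fun h' i
      rw [Finsupp.smul_apply, smul_eq_mul] at this
      rcases mul_eq_zero.mp this with h | h
      · exact absurd h hdet
      · simpa using h
    simpa using bC.repr.map_eq_zero_iff.mp hrepr
  have hcancelM : ∀ x : M, d • x = 0 → x = 0 := by
    intro x hx
    have h' : d • bM.repr x = 0 := by rw [← map_smul, hx, map_zero]
    have hrepr : bM.repr x = 0 := by
      ext i
      have := DFunLike.congr_fun h' i
      rw [Finsupp.smul_apply, smul_eq_mul] at this
      rcases mul_eq_zero.mp this with h | h
      · exact absurd h hdet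
      · simpa using h
    simpa using bM.repr.map_eq_zero_iff.mp hrepr
  have hfinj : Function.Injective f := by
    intro x y hxy
    have h0 : d • (x - y) = 0 := by
      rw [smul_sub, ← hTf, ← hTf, hxy, sub_self]
    exact sub_eq_zero.mp (hcancelC _ h0)
  have hTsmul : ∀ (γ : CC) (x : M), T (γ • x) = γ * T x := by
    intro γ x
    apply hfinj
    have hL : f (T (γ • x)) = d • (γ • x) := hfT _
    have hR : f (γ * T x) = γ • f (T x) := by
      rw [← smul_eq_mul, map_smul]
    rw [hL, hR, hfT, smul_comm]
  let T' : M →ₗ[CC] CC :=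
    { toFun := T
      map_add' := T.map_add
      map_smul' := fun γ x => by simpa [smul_eq_mul] using hTsmul γ x }
  have hT'inj : Function.Injective T' := by
    intro x y hxy
    have h0 : d • (x - y) = 0 := by
      have : f (T x) = f (T y) := congrArg f hxy
      rw [hfT, hfT] at this
      rw [smul_sub, this, sub_self]
    exact sub_eq_zero.mp (hcancelM _ h0)
  refine ⟨LinearMap.range T', ⟨?_⟩, ⟨?_⟩⟩
  · exact bM.map ((LinearEquiv.ofInjective T' hT'inj).restrictScalars D)
  · exact LinearEquiv.ofInjective T' hT'inj
end

section
/- The C-module M = ℤx ⊕ ℤy over C = ℤ[τ]/(τ²), with τ acting as zero on M, is a traceable C-module (corresponding to the zero binary quadratic form), but M is not isomorphic as a C-module to any ideal of C. -/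
open Polynomial

noncomputable section AuxZeroForm

abbrev Cring' := AdjoinRoot (X ^ 2 : ℤ[X])

lemma hmonic' : (X ^ 2 : ℤ[X]).Monic := monic_X_pow 2

abbrev pbC : PowerBasis ℤ Cring' := AdjoinRoot.powerBasis' hmonic'

lemma pbC_dim : pbC.dim = 2 := by simp

def bC : Module.Basis (Fin 2) ℤ Cring' := pbC.basis.reindex (finCongr pbC_dim)

lemma root_sq' : (AdjoinRoot.root (X ^ 2 : ℤ[X])) ^ 2 = 0 := by
  have := AdjoinRoot.eval₂_root (X ^ 2 : ℤ[X])
  simpa using this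

lemma bC_apply (i : Fin 2) : bC i = AdjoinRoot.root (X ^ 2 : ℤ[X]) ^ (i : ℕ) := by
  rw [bC, Module.Basis.reindex_apply, pbC.basis_eq_pow]
  simp

lemma bC_zero : bC 0 = 1 := by rw [bC_apply]; simp

lemma bC_one : bC 1 = AdjoinRoot.root (X ^ 2 : ℤ[X]) := by rw [bC_apply]; simp

lemma decompC (z : Cring') : ∃ a b : ℤ,
    z = a • (1 : Cring') + b • AdjoinRoot.root (X ^ 2 : ℤ[X]) := by
  obtain ⟨p, rfl⟩ := AdjoinRoot.mk_surjective z
  refine ⟨p.coeff 0, p.coeff 1, ?_⟩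
  have h1 : X * p.divX + C (p.coeff 0) = p := p.X_mul_divX_add
  have h2 : X * p.divX.divX + C (p.divX.coeff 0) = p.divX := p.divX.X_mul_divX_add
  have h3 : p.divX.coeff 0 = p.coeff 1 := coeff_divX
  have hp : p = C (p.coeff 0) + C (p.coeff 1) * X + X ^ 2 * p.divX.divX := by
    linear_combination (-1 : ℤ[X]) * h1 - X * h2 + X * congrArg C h3
  conv_lhs => rw [hp]
  simp only [map_add, map_mul, map_pow, AdjoinRoot.mk_X, AdjoinRoot.mk_C, zsmul_eq_mul]
  have hc : ∀ a : ℤ, (AdjoinRoot.of (X ^ 2 : ℤ[X])) a = (a : Cring') := by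
    intro a; simp [AdjoinRoot.of, map_intCast]
  rw [hc, hc]
  linear_combination (AdjoinRoot.mk (X ^ 2 : ℤ[X]) p.divX.divX) * root_sq'

lemma reprC (a b : ℤ) (i : Fin 2) :
    bC.repr (a • (1 : Cring') + b • AdjoinRoot.root (X ^ 2 : ℤ[X])) i = ![a, b] i := by
  rw [← bC_zero, ← bC_one]
  simp only [map_add, map_smul, Module.Basis.repr_self]
  fin_cases i <;> simp

lemma smul_root_eq_zero' {a : ℤ}
    (h : a • AdjoinRoot.root (X ^ 2 : ℤ[X]) = 0) : a = 0 := by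
  have h0 : a • AdjoinRoot.root (X ^ 2 : ℤ[X]) =
      (0 : ℤ) • (1 : Cring') + a • AdjoinRoot.root (X ^ 2 : ℤ[X]) := by simp
  have := reprC 0 a 1
  rw [← h0, h] at this
  simpa using this.symm

def φ0 : AdjoinRoot (X ^ 2 : ℤ[X]) →ₐ[ℤ] Module.End ℤ (Fin 2 → ℤ) :=
  Ideal.Quotient.liftₐ (Ideal.span {(X ^ 2 : ℤ[X])}) (aeval (0 : Module.End ℤ (Fin 2 → ℤ)))
    (fun a ha => by
      obtain ⟨c, rfl⟩ := Ideal.mem_span_singleton.mp ha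
      simp)

lemma φ0_mk (p : ℤ[X]) : φ0 (AdjoinRoot.mk _ p) = aeval (0 : Module.End ℤ (Fin 2 → ℤ)) p := rfl

lemma φ0_root : φ0 (AdjoinRoot.root (X ^ 2 : ℤ[X])) = 0 := by
  rw [show AdjoinRoot.root (X ^ 2 : ℤ[X]) = AdjoinRoot.mk _ X from rfl, φ0_mk]; simp

end AuxZeroForm

/-- For `C = ℤ[τ]/(τ²)` and `M = ℤ² ` with `τ` acting as zero
(encoded by the `ℤ`-algebra map `φ : C → End_ℤ(ℤ²)` with `φ(τ) = 0`), the module `M`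
is traceable (every `z : C` has the same trace on `M` as on `C`), but `M` is not
isomorphic as a `C`-module to any ideal of `C`. -/
theorem zero_form_module_traceable_not_an_ideal :
    ∃ φ : AdjoinRoot (X ^ 2 : ℤ[X]) →ₐ[ℤ] Module.End ℤ (Fin 2 → ℤ),
      φ (AdjoinRoot.root _) = 0 ∧
      (∀ z : AdjoinRoot (X ^ 2 : ℤ[X]),
        LinearMap.trace ℤ (Fin 2 → ℤ) (φ z) =
          LinearMap.trace ℤ (AdjoinRoot (X ^ 2 : ℤ[X])) (LinearMap.mulLeft ℤ z)) ∧
      ¬ ∃ (I : Ideal (AdjoinRoot (X ^ 2 : ℤ[X]))) (e : (Fin 2 → ℤ) ≃ₗ[ℤ] I),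
          ∀ (z : AdjoinRoot (X ^ 2 : ℤ[X])) (m : Fin 2 → ℤ),
            e (φ z m) = z • (e m) := by
  set t := AdjoinRoot.root (X ^ 2 : ℤ[X]) with ht
  refine ⟨φ0, φ0_root, ?_, ?_⟩
  · -- traceability
    intro z
    obtain ⟨a, b, rfl⟩ := decompC z
    have hφ : φ0 (a • (1 : Cring') + b • t)
        = a • (1 : Module.End ℤ (Fin 2 → ℤ)) := by
      rw [map_add, map_zsmul, map_zsmul, map_one, φ0_root]
      simp
    rw [hφ]
    have hM : LinearMap.trace ℤ (Fin 2 → ℤ) (a • (1 : Module.End ℤ (Fin 2 → ℤ))) = 2 * a := by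
      rw [map_smul, LinearMap.trace_one]
      simp [Module.finrank_fin_fun, mul_comm]
    rw [hM, LinearMap.trace_eq_matrix_trace ℤ bC, Matrix.trace]
    have hz1 : (a • (1 : Cring') + b • t) * bC 0 = a • (1 : Cring') + b • t := by
      rw [bC_zero, mul_one]
    have hz2' : (a • (1 : Cring') + b • t) * bC 1 = (0 : ℤ) • (1 : Cring') + a • t := by
      rw [bC_one]
      simp only [zsmul_eq_mul, zero_smul, zero_add]
      linear_combination (b : Cring') * root_sq'
    rw [Fin.sum_univ_two]
    simp only [Matrix.diag_apply, LinearMap.toMatrix_apply, LinearMap.mulLeft_apply, ← ht,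
      hz1, hz2']
    rw [reprC a b 0, reprC 0 a 1]
    simp only [Matrix.cons_val_zero, Matrix.cons_val_one, Matrix.head_cons]
    ring
  · -- not isomorphic to an ideal
    rintro ⟨I, e, he⟩
    have hkill : ∀ m : Fin 2 → ℤ, t * ((e m : I) : Cring') = 0 := by
      intro m
      have h1 := he t m
      rw [φ0_root] at h1
      simp only [LinearMap.zero_apply, map_zero] at h1
      have := congrArg (Subtype.val) h1
      simpa [smul_eq_mul] using this.symm
    have hform : ∀ m : Fin 2 → ℤ, ∃ c : ℤ, ((e m : I) : Cring') = c • t := by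
      intro m
      obtain ⟨a, b, hab⟩ := decompC ((e m : I) : Cring')
      have h0 := hkill m
      rw [hab] at h0
      have h0' : a • t = 0 := by
        have hmul : t * (a • (1 : Cring') + b • t) = a • t := by
          simp only [zsmul_eq_mul]
          linear_combination (b : Cring') * root_sq'
        rw [hmul] at h0; exact h0
      have ha : a = 0 := smul_root_eq_zero' h0'
      exact ⟨b, by rw [hab, ha]; simp [ht]⟩
    obtain ⟨cu, hu⟩ := hform ![1, 0]
    obtain ⟨cv, hv⟩ := hform ![0, 1]
    have hcomm : ((cv • e ![1, 0] : I) : Cring') = ((cu • e ![0, 1] : I) : Cring') := by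
      push_cast [hu, hv]
      rw [smul_comm]
    have heq : e (cv • ![1, 0]) = e (cu • ![0, 1]) := by
      rw [map_smul, map_smul]
      exact Subtype.ext hcomm
    have h2 : cv • (![1, 0] : Fin 2 → ℤ) = cu • ![0, 1] := e.injective heq
    have hcv : cv = 0 := by
      have := congrFun h2 0
      simpa using this
    have hcu : cu = 0 := by
      have := congrFun h2 1
      simpa using this.symm
    have hu0 : e ![1, 0] = 0 := by
      apply Subtype.ext
      rw [hu, hcu]; simp
    have hzero : (![1, 0] : Fin 2 → ℤ) = 0 :=
      e.injective (by rw [hu0, map_zero] : e ![1, 0] = e 0)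
    have := congrFun hzero 0
    simp at this
end
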